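/- arXiv:2105.05172 — 3 statements merged into one kernel-verified Lean document; each statement's English description precedes it below -/
import Mathlib

section
/- With A(k) = C(n - m*k + k, k) * P(w)^k and B(t) = P(N_w = t) for a nonoverlapping word w of length m in an i.i.d. string of length n, the identity A(k) = sum_{t >= k} B(t) * C(t, k) holds for all k with n - m*k >= 0. -/
open MeasureTheory
open scoped Classical

/-- `w` occurs in `z` at position `i` (0-indexed) as a contiguous substring. -/
def OccursAt {α : Type*} (z w : List α) (i : ℕ) : Prop :=
  i + w.length ≤ z.length ∧ (z.drop i).take w.length = w

/-- A word `w` is nonoverlapping if no string of length `< 2|w|` contains two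
occurrences of `w` at distinct positions. -/
def Nonoverlapping {α : Type*} (w : List α) : Prop :=
  ¬ ∃ (z : List α) (i j : ℕ), z.length < 2 * w.length ∧ i ≠ j ∧
    OccursAt z w i ∧ OccursAt z w j

/-- The number of occurrences of the word `w` in the string `z`. -/
noncomputable def countOcc {α : Type*} (w z : List α) : ℕ :=
  ((Finset.range z.length).filter (fun i => OccursAt z w i)).card

/-- The probability of the word `w` at a fixed position under the i.i.d. law with
marginal `μ`. -/
noncomputable def wordProb {α : Type*} [MeasurableSpace α] (μ : Measure α)
    (w : List α) : ℝ :=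
  (w.map fun a => (μ {a}).toReal).prod

lemma pi_singleton {α : Type*} [Fintype α] [MeasurableSpace α] [MeasurableSingletonClass α]
    (μ : Measure α) [IsProbabilityMeasure μ] (n : ℕ) (x : Fin n → α) :
    (Measure.pi fun _ : Fin n => μ) {x} = ∏ i : Fin n, μ {x i} := by
  rw [show ({x} : Set (Fin n → α)) = Set.univ.pi (fun i => {x i}) by
    ext y; simp [Set.mem_pi, funext_iff]]
  exact Measure.pi_pi _ _

lemma pi_toReal {α : Type*} [Fintype α] [MeasurableSpace α] [MeasurableSingletonClass α]
    (μ : Measure α) [IsProbabilityMeasure μ] (n : ℕ) (s : Set (Fin n → α)) :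
    ((Measure.pi fun _ : Fin n => μ) s).toReal
      = ∑ x : Fin n → α, if x ∈ s then ∏ i : Fin n, (μ {x i}).toReal else 0 := by
  classical
  have hsing : ∀ x : Fin n → α, MeasurableSet ({x} : Set (Fin n → α)) := by
    intro x
    rw [show ({x} : Set (Fin n → α)) = Set.univ.pi (fun i => {x i}) by
      ext y; simp [Set.mem_pi, funext_iff]]
    exact MeasurableSet.pi (Set.countable_univ) (fun i _ => measurableSet_singleton _)
  have key : (Measure.pi fun _ : Fin n => μ) s
      = ∑ x ∈ Finset.univ.filter (· ∈ s), (Measure.pi fun _ : Fin n => μ) {x} := by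
    conv_lhs => rw [show s = ⋃ x ∈ Finset.univ.filter (· ∈ s), ({x} : Set (Fin n → α)) by ext y; simp]
    refine measure_biUnion_finset ?_ (fun x _ => hsing x)
    intro x _ y _ hxy
    simp [Set.disjoint_singleton, hxy]
  rw [key, ENNReal.toReal_sum, Finset.sum_filter]
  · refine Finset.sum_congr rfl fun x _ => ?_
    split_ifs with h
    · rw [pi_singleton, ENNReal.toReal_prod]
    · rfl
  · intro x _; rw [pi_singleton]
    exact ENNReal.prod_ne_top (fun i _ => (measure_lt_top μ _).ne)

lemma sum_p_one {α : Type*} [Fintype α] [MeasurableSpace α] [MeasurableSingletonClass α]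
    (μ : Measure α) [IsProbabilityMeasure μ] : ∑ a : α, (μ {a}).toReal = 1 := by
  have h : ∑ a : α, μ {a} = μ Set.univ := by
    rw [← MeasureTheory.measure_biUnion_finset]
    · simp [Set.iUnion_of_singleton]
    · intro x _ y _ hxy; simp [Set.disjoint_singleton, hxy]
    · intro b _; exact measurableSet_singleton b
  rw [← ENNReal.toReal_sum (fun a _ => (measure_lt_top μ _).ne), h, measure_univ,
    ENNReal.toReal_one]

lemma occursAt_ofFn_iff {α : Type*} {n : ℕ} (x : Fin n → α) (w : List α) (i : ℕ) :
    OccursAt (List.ofFn x) w i ↔ i + w.length ≤ n ∧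
      ∀ t : ℕ, ∀ ht : t < w.length, ∀ h2 : i + t < n, x ⟨i + t, h2⟩ = w[t] := by
  constructor
  · rintro ⟨h1, h2⟩
    rw [List.length_ofFn] at h1
    refine ⟨h1, fun t ht h2' => ?_⟩
    have := congrArg (fun l => l[t]?) h2
    simp only [List.getElem?_take, ht, if_pos, List.getElem?_drop, List.getElem?_ofFn,
      List.ofFnNthVal] at this
    rw [dif_pos h2', List.getElem?_eq_getElem ht] at this
    simpa using this
  · rintro ⟨h1, h2⟩
    refine ⟨by simpa using h1, ?_⟩
    apply List.ext_getElem
    · simp [List.length_take, List.length_drop]; omega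
    · intro t ht1 ht2
      rw [List.getElem_take, List.getElem_drop, List.getElem_ofFn]
      exact h2 t ht2 _

lemma no_close_occ {α : Type*} {w : List α} {m : ℕ} (hw : Nonoverlapping w)
    (hm : w.length = m) (hm1 : 1 ≤ m) (z : List α) {i j : ℕ}
    (hij : i < j) (hjm : j < i + m) (hi : OccursAt z w i) (hj : OccursAt z w j) : False := by
  apply hw
  refine ⟨(z.drop i).take (j - i + m), 0, j - i, ?_, by omega, ?_, ?_⟩
  · rw [List.length_take, List.length_drop, hm]
    have := hj.1
    rw [hm] at this
    omega
  · constructor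
    · rw [List.length_take, List.length_drop, hm]
      have := hj.1; rw [hm] at this; omega
    · rw [List.drop_zero, List.take_take, hm]
      have : m ⊓ (j - i + m) = m := by omega
      rw [this, ← hm]
      exact hi.2
  · constructor
    · rw [List.length_take, List.length_drop, hm]
      have := hj.1; rw [hm] at this; omega
    · rw [List.drop_take, List.drop_drop, List.take_take, hm]
      have h1 : j - i + m - (j - i) = m := by omega
      have h2 : i + (j - i) = j := by omega
      rw [h1, h2, min_self, ← hm]
      exact hj.2

lemma map_prod_getD {α : Type*} (p : α → ℝ) (d : α) (w : List α) :
    (w.map p).prod = ∏ t ∈ Finset.range w.length, p (w.getD t d) := by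
  induction w with
  | nil => simp
  | cons a w ih =>
    rw [List.map_cons, List.prod_cons, List.length_cons, Finset.prod_range_succ', ih]
    simp [mul_comm]

lemma good_prob {α : Type*} [Fintype α] (p : α → ℝ) (hp : ∑ a, p a = 1)
    (n m : ℕ) (w : List α) (d : α) (hm : w.length = m) (hm1 : 1 ≤ m) (S : Finset ℕ)
    (hSn : ∀ i ∈ S, i + m ≤ n) (hgap : ∀ i ∈ S, ∀ j ∈ S, i < j → i + m ≤ j) :
    ∑ x : Fin n → α, (if ∀ i ∈ S, OccursAt (List.ofFn x) w i then ∏ i, p (x i) else 0)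
      = ((w.map p).prod) ^ S.card := by
  classical
  -- the constraint function
  set F : ℕ → α → ℝ := fun i a =>
    p a * ∏ jt ∈ S ×ˢ Finset.range m,
      (if jt.1 + jt.2 = i ∧ a ≠ w.getD jt.2 d then 0 else 1) with hF
  -- uniqueness of covering pair
  have huniq : ∀ jt ∈ S ×ˢ Finset.range m, ∀ jt' ∈ S ×ˢ Finset.range m,
      jt.1 + jt.2 = jt'.1 + jt'.2 → jt = jt' := by
    rintro ⟨j, t⟩ hjt ⟨j', t'⟩ hjt' he
    simp only [Finset.mem_product, Finset.mem_range] at hjt hjt'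
    have he' : j + t = j' + t' := he
    have hj : j = j' := by
      by_contra hne
      rcases Nat.lt_or_ge j j' with h | h
      · have := hgap j hjt.1 j' hjt'.1 h; omega
      · have h' : j' < j := by omega
        have := hgap j' hjt'.1 j hjt.1 h'; omega
    subst hj
    have ht2 : t = t' := by omega
    subst ht2
    rfl
  -- step 1: pointwise identity
  have key1 : ∀ x : Fin n → α,
      (if ∀ i ∈ S, OccursAt (List.ofFn x) w i then ∏ i, p (x i) else 0)
        = ∏ i : Fin n, F (i : ℕ) (x i) := by
    intro x
    simp only [hF]
    rw [Finset.prod_mul_distrib]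
    by_cases hQ : ∀ i ∈ S, OccursAt (List.ofFn x) w i
    · rw [if_pos hQ]
      have : ∀ i : Fin n, (∏ jt ∈ S ×ˢ Finset.range m,
          if jt.1 + jt.2 = (i : ℕ) ∧ x i ≠ w.getD jt.2 d then (0:ℝ) else 1) = 1 := by
        intro i
        refine Finset.prod_eq_one fun jt hjt => ?_
        rw [if_neg]
        rintro ⟨h1, h2⟩
        simp only [Finset.mem_product, Finset.mem_range] at hjt
        have hocc := (occursAt_ofFn_iff x w jt.1).mp (hQ jt.1 hjt.1)
        have ht : jt.2 < w.length := by omega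
        have h2' : jt.1 + jt.2 < n := by have := hSn jt.1 hjt.1; omega
        have := hocc.2 jt.2 ht h2'
        apply h2
        have hIdx : (⟨jt.1 + jt.2, h2'⟩ : Fin n) = i := Fin.ext h1
        rw [List.getD_eq_getElem w d ht, ← hIdx]
        exact this
      simp only [this, Finset.prod_const_one, mul_one]
    · rw [if_neg hQ]
      push_neg at hQ
      obtain ⟨j, hjS, hjocc⟩ := hQ
      rw [occursAt_ofFn_iff] at hjocc
      push_neg at hjocc
      have hjn := hSn j hjS
      obtain ⟨t, ht, h2, hne⟩ := hjocc (by rw [hm]; omega)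
      have hin : j + t < n := h2
      symm
      apply mul_eq_zero_of_right
      apply Finset.prod_eq_zero (Finset.mem_univ (⟨j + t, hin⟩ : Fin n))
      apply Finset.prod_eq_zero (show ((j, t) : ℕ × ℕ) ∈ S ×ˢ Finset.range m from by
        simp [hjS]; omega)
      rw [if_pos]
      refine ⟨rfl, ?_⟩
      rw [List.getD_eq_getElem w d ht]
      exact hne
  -- step 2: factorize the sum
  have key2 : ∑ x : Fin n → α, ∏ i : Fin n, F (i : ℕ) (x i)
      = ∏ i : Fin n, ∑ a : α, F (i : ℕ) a := by
    rw [Finset.prod_univ_sum]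
    rw [Fintype.piFinset_univ]
  -- step 3: evaluate each factor
  set cov : Finset ℕ := (S ×ˢ Finset.range m).image (fun jt => jt.1 + jt.2) with hcov
  have hsumF : ∀ i : ℕ, i ∉ cov → ∑ a : α, F i a = 1 := by
    intro i hi
    have : ∀ a : α, F i a = p a := by
      intro a
      simp only [hF]
      rw [Finset.prod_eq_one, mul_one]
      intro jt hjt
      rw [if_neg]
      rintro ⟨h1, _⟩
      exact hi (Finset.mem_image.mpr ⟨jt, hjt, h1⟩)
    simp only [this]; exact hp
  have hsumF2 : ∀ jt ∈ S ×ˢ Finset.range m, ∑ a : α, F (jt.1 + jt.2) a = p (w.getD jt.2 d) := by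
    rintro ⟨j, t⟩ hjt
    have : ∀ a : α, F (j + t) a = if a = w.getD t d then p a else 0 := by
      intro a
      simp only [hF]
      by_cases ha : a = w.getD t d
      · rw [if_pos ha, Finset.prod_eq_one, mul_one]
        intro jt' hjt'
        rw [if_neg]
        rintro ⟨h1, h2⟩
        have := huniq jt' hjt' (j, t) hjt h1
        subst this
        exact h2 ha
      · rw [if_neg ha, Finset.prod_eq_zero hjt, mul_zero]
        rw [if_pos ⟨rfl, ha⟩]
    simp only [this]
    rw [Finset.sum_ite_eq' Finset.univ (w.getD t d) p]
    simp
  -- combine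
  calc ∑ x : Fin n → α, (if ∀ i ∈ S, OccursAt (List.ofFn x) w i then ∏ i, p (x i) else 0)
      = ∑ x : Fin n → α, ∏ i : Fin n, F (i : ℕ) (x i) := Finset.sum_congr rfl fun x _ => key1 x
    _ = ∏ i : Fin n, ∑ a : α, F (i : ℕ) a := key2
    _ = ∏ i ∈ Finset.range n, ∑ a : α, F i a := Fin.prod_univ_eq_prod_range (fun i => ∑ a : α, F i a) n
    _ = ∏ i ∈ cov, ∑ a : α, F i a := by
        refine (Finset.prod_subset ?_ ?_).symm
        · intro i hi
          obtain ⟨⟨j, t⟩, hjt, rfl⟩ := Finset.mem_image.mp hi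
          simp only [Finset.mem_product, Finset.mem_range] at hjt
          have := hSn j hjt.1
          simp only [Finset.mem_range]
          omega
        · intro i _ hi
          exact hsumF i hi
    _ = ∏ jt ∈ S ×ˢ Finset.range m, ∑ a : α, F (jt.1 + jt.2) a := Finset.prod_image huniq
    _ = ∏ jt ∈ S ×ˢ Finset.range m, p (w.getD jt.2 d) := Finset.prod_congr rfl hsumF2
    _ = ∏ j ∈ S, ∏ t ∈ Finset.range m, p (w.getD t d) := by rw [Finset.prod_product]
    _ = ∏ j ∈ S, (w.map p).prod := by
        refine Finset.prod_congr rfl fun j _ => ?_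
        rw [map_prod_getD p d w, hm]
    _ = ((w.map p).prod) ^ S.card := Finset.prod_const _

lemma chain_getElem {m : ℕ} {l : List ℕ}
    (hgap : ∀ j1 j2 : ℕ, ∀ _h1 : j1 < l.length, ∀ _h2 : j2 < l.length,
      j1 < j2 → l[j1] + m ≤ l[j2]) :
    ∀ d j1, ∀ h : j1 + d < l.length, l[j1]'(by omega) + m * d ≤ l[j1 + d]'h := by
  intro d
  induction d with
  | zero => intro j1 h; simp
  | succ d ih =>
    intro j1 h
    have h1 : j1 + d < l.length := by omega
    have i1 := ih j1 h1
    have i2 := hgap (j1 + d) (j1 + d + 1) h1 (by omega) (by omega)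
    have i3 : l[j1]'(by omega) + m * (d + 1) ≤ l[(j1 + d) + 1]'(by omega) := by
      have e : m * (d + 1) = m * d + m := by ring
      omega
    exact i3

lemma sorted_getElem_lt {l : List ℕ} (h : l.Pairwise (· < ·)) {j1 j2 : ℕ}
    (h1 : j1 < l.length) (h2 : j2 < l.length) (hlt : j1 < j2) : l[j1] < l[j2] :=
  List.pairwise_iff_getElem.mp h _ _ _ _ hlt

lemma sorted_gap_one {l : List ℕ} (h : l.Pairwise (· < ·)) :
    ∀ j1 j2 : ℕ, ∀ _h1 : j1 < l.length, ∀ _h2 : j2 < l.length,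
      j1 < j2 → l[j1] + 1 ≤ l[j2] :=
  fun _ _ h1 h2 hlt => sorted_getElem_lt h h1 h2 hlt

lemma count_good (n m k : ℕ) (hm1 : 1 ≤ m) (hk : m * k ≤ n) :
    (((Finset.range n).powersetCard k).filter
      (fun S => (∀ i ∈ S, i + m ≤ n) ∧ ∀ i ∈ S, ∀ j ∈ S, i < j → i + m ≤ j)).card
      = (n - m * k + k).choose k := by
  classical
  obtain ⟨m', rfl⟩ : ∃ m', m = m' + 1 := ⟨m - 1, by omega⟩
  have htarget : (n - (m' + 1) * k + k).choose k
      = ((Finset.range (n - (m' + 1) * k + k)).powersetCard k).card := by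
    rw [Finset.card_powersetCard, Finset.card_range]
  rw [htarget]
  refine Finset.card_bij'
    (fun S _ => ((S.sort (· ≤ ·)).mapIdx (fun j i => i - m' * j)).toFinset)
    (fun T _ => ((T.sort (· ≤ ·)).mapIdx (fun j b => b + m' * j)).toFinset)
    ?hi ?hj ?li ?ri
  case hi =>
    intro S hS
    simp only [Finset.mem_filter, Finset.mem_powersetCard] at hS
    obtain ⟨⟨hSsub, hScard⟩, hSbound, hSgap⟩ := hS
    set l := S.sort (· ≤ ·) with hl
    have hsorted : l.Pairwise (· < ·) := (Finset.sortedLT_sort S).pairwise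
    have hlen : l.length = k := by rw [hl, Finset.length_sort, hScard]
    have hmem : ∀ j : ℕ, ∀ h : j < l.length, l[j] ∈ S := fun j h =>
      (Finset.mem_sort _).mp (List.getElem_mem h)
    have hbound : ∀ j : ℕ, ∀ h : j < l.length, l[j] + (m' + 1) ≤ n :=
      fun j h => hSbound _ (hmem j h)
    have hgap : ∀ j1 j2 : ℕ, ∀ _h1 : j1 < l.length, ∀ _h2 : j2 < l.length,
        j1 < j2 → l[j1] + (m' + 1) ≤ l[j2] := fun j1 j2 h1 h2 hlt =>
      hSgap _ (hmem j1 h1) _ (hmem j2 h2) (sorted_getElem_lt hsorted h1 h2 hlt)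
    have hlow : ∀ j : ℕ, ∀ h : j < l.length, (m' + 1) * j ≤ l[j] := by
      intro j h
      have := chain_getElem hgap j 0 (by omega)
      simp only [Nat.zero_add] at this
      omega
    set L := l.mapIdx (fun j i => i - m' * j) with hL
    have hLlen : L.length = k := by rw [hL, List.length_mapIdx, hlen]
    have hLget : ∀ j : ℕ, ∀ h : j < L.length, L[j] = l[j]'(by omega) - m' * j :=
      fun j h => List.getElem_mapIdx
    have hLsorted : L.Pairwise (· < ·) := by
      refine List.pairwise_iff_getElem.mpr ?_
      intro j1 j2 h1 h2 hlt
      obtain ⟨d, rfl⟩ : ∃ d, j2 = j1 + d + 1 := ⟨j2 - j1 - 1, by omega⟩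
      rw [hLget j1 (by omega), hLget (j1 + d + 1) (by omega)]
      have hc : l[j1]'(by omega) + (m' + 1) * (d + 1) ≤ l[(j1 + d) + 1]'(by omega) :=
        chain_getElem hgap (d + 1) j1 (by omega)
      have hlo := hlow j1 (by omega)
      have e1 : m' * (j1 + d + 1) = m' * j1 + m' * d + m' := by ring
      have e2 : (m' + 1) * (d + 1) = m' * d + m' + d + 1 := by ring
      have e3 : (m' + 1) * j1 = m' * j1 + j1 := by ring
      omega
    have hLbound : ∀ j : ℕ, ∀ h : j < L.length, L[j] < n - (m' + 1) * k + k := by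
      intro j h
      obtain ⟨e, he⟩ : ∃ e, k = j + e + 1 := ⟨k - j - 1, by omega⟩
      have hc : l[j]'(by omega) + (m' + 1) * e ≤ l[j + e]'(by omega) :=
        chain_getElem hgap e j (by omega)
      have hb := hbound (j + e) (by omega)
      have hlo := hlow j (by omega)
      rw [hLget j h]
      have q0 : (m' + 1) * k = m' * j + m' * e + m' + j + e + 1 := by rw [he]; ring
      have q2 : (m' + 1) * e = m' * e + e := by ring
      have q3 : (m' + 1) * j = m' * j + j := by ring
      omega
    rw [Finset.mem_powersetCard]
    constructor
    · intro i hi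
      rw [List.mem_toFinset, List.mem_iff_getElem] at hi
      obtain ⟨j, hj, rfl⟩ := hi
      rw [Finset.mem_range]
      exact hLbound j hj
    · rw [List.toFinset_card_of_nodup hLsorted.nodup, hLlen]
  case hj =>
    intro T hT
    rw [Finset.mem_powersetCard] at hT
    obtain ⟨hTsub, hTcard⟩ := hT
    set l := T.sort (· ≤ ·) with hl
    have hsorted : l.Pairwise (· < ·) := (Finset.sortedLT_sort T).pairwise
    have hlen : l.length = k := by rw [hl, Finset.length_sort, hTcard]
    have hmem : ∀ j : ℕ, ∀ h : j < l.length, l[j] ∈ T := fun j h =>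
      (Finset.mem_sort _).mp (List.getElem_mem h)
    have hbound : ∀ j : ℕ, ∀ h : j < l.length, l[j] < n - (m' + 1) * k + k := by
      intro j h
      have := hTsub (hmem j h)
      rwa [Finset.mem_range] at this
    set U := l.mapIdx (fun j b => b + m' * j) with hU
    have hUlen : U.length = k := by rw [hU, List.length_mapIdx, hlen]
    have hUget : ∀ j : ℕ, ∀ h : j < U.length, U[j] = l[j]'(by omega) + m' * j :=
      fun j h => List.getElem_mapIdx
    have hUgap : ∀ j1 j2 : ℕ, ∀ _h1 : j1 < U.length, ∀ _h2 : j2 < U.length,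
        j1 < j2 → U[j1] + (m' + 1) ≤ U[j2] := by
      intro j1 j2 h1 h2 hlt
      obtain ⟨d, rfl⟩ : ∃ d, j2 = j1 + d + 1 := ⟨j2 - j1 - 1, by omega⟩
      rw [hUget j1 h1, hUget (j1 + d + 1) h2]
      have hc : l[j1]'(by omega) + 1 * (d + 1) ≤ l[(j1 + d) + 1]'(by omega) :=
        chain_getElem (sorted_gap_one hsorted) (d + 1) j1 (by omega)
      have e1 : m' * (j1 + d + 1) = m' * j1 + m' * d + m' := by ring
      omega
    have hUbound : ∀ j : ℕ, ∀ h : j < U.length, U[j] + (m' + 1) ≤ n := by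
      intro j h
      obtain ⟨e, he⟩ : ∃ e, k = j + e + 1 := ⟨k - j - 1, by omega⟩
      have hc : l[j]'(by omega) + 1 * e ≤ l[j + e]'(by omega) :=
        chain_getElem (sorted_gap_one hsorted) e j (by omega)
      have hb := hbound (j + e) (by omega)
      rw [hUget j h]
      have q0 : (m' + 1) * k = m' * j + m' * e + m' + j + e + 1 := by rw [he]; ring
      have hk' : (m' + 1) * k ≤ n := hk
      omega
    have hUsorted : U.Pairwise (· < ·) := by
      refine List.pairwise_iff_getElem.mpr ?_
      intro j1 j2 h1 h2 hlt
      have := hUgap j1 j2 h1 h2 hlt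
      omega
    simp only [Finset.mem_filter, Finset.mem_powersetCard]
    refine ⟨⟨?_, ?_⟩, ?_, ?_⟩
    · intro i hi
      rw [List.mem_toFinset, List.mem_iff_getElem] at hi
      obtain ⟨j, hj, rfl⟩ := hi
      rw [Finset.mem_range]
      have := hUbound j hj
      omega
    · rw [List.toFinset_card_of_nodup hUsorted.nodup, hUlen]
    · intro i hi
      rw [List.mem_toFinset, List.mem_iff_getElem] at hi
      obtain ⟨j, hj, rfl⟩ := hi
      exact hUbound j hj
    · intro i hi j hj hij
      rw [List.mem_toFinset, List.mem_iff_getElem] at hi hj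
      obtain ⟨j1, h1, rfl⟩ := hi
      obtain ⟨j2, h2, rfl⟩ := hj
      have hlt : j1 < j2 := by
        rcases Nat.lt_trichotomy j1 j2 with h | h | h
        · exact h
        · exact absurd (h ▸ rfl) (Nat.ne_of_lt hij)
        · exact absurd (sorted_getElem_lt hUsorted h2 h1 h) (by omega)
      exact hUgap j1 j2 h1 h2 hlt
  case li =>
    intro S hS
    simp only [Finset.mem_filter, Finset.mem_powersetCard] at hS
    obtain ⟨⟨hSsub, hScard⟩, hSbound, hSgap⟩ := hS
    set l := S.sort (· ≤ ·) with hl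
    have hsorted : l.Pairwise (· < ·) := (Finset.sortedLT_sort S).pairwise
    have hmem : ∀ j : ℕ, ∀ h : j < l.length, l[j] ∈ S := fun j h =>
      (Finset.mem_sort _).mp (List.getElem_mem h)
    have hgap : ∀ j1 j2 : ℕ, ∀ _h1 : j1 < l.length, ∀ _h2 : j2 < l.length,
        j1 < j2 → l[j1] + (m' + 1) ≤ l[j2] := fun j1 j2 h1 h2 hlt =>
      hSgap _ (hmem j1 h1) _ (hmem j2 h2) (sorted_getElem_lt hsorted h1 h2 hlt)
    have hlow : ∀ j : ℕ, ∀ h : j < l.length, (m' + 1) * j ≤ l[j] := by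
      intro j h
      have := chain_getElem hgap j 0 (by omega)
      simp only [Nat.zero_add] at this
      omega
    set L := l.mapIdx (fun j i => i - m' * j) with hL
    have hLl : L.length = l.length := by rw [hL, List.length_mapIdx]
    have hLget : ∀ j : ℕ, ∀ h : j < L.length, L[j] = l[j]'(by omega) - m' * j :=
      fun j h => List.getElem_mapIdx
    have hLsorted : L.Pairwise (· < ·) := by
      refine List.pairwise_iff_getElem.mpr ?_
      intro j1 j2 h1 h2 hlt
      obtain ⟨d, rfl⟩ : ∃ d, j2 = j1 + d + 1 := ⟨j2 - j1 - 1, by omega⟩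
      rw [hLget j1 (by omega), hLget (j1 + d + 1) (by omega)]
      have hc : l[j1]'(by omega) + (m' + 1) * (d + 1) ≤ l[(j1 + d) + 1]'(by omega) :=
        chain_getElem hgap (d + 1) j1 (by omega)
      have hlo := hlow j1 (by omega)
      have e1 : m' * (j1 + d + 1) = m' * j1 + m' * d + m' := by ring
      have e2 : (m' + 1) * (d + 1) = m' * d + m' + d + 1 := by ring
      have e3 : (m' + 1) * j1 = m' * j1 + j1 := by ring
      omega
    have hsortL : Finset.sort L.toFinset (· ≤ ·) = L :=
      (List.toFinset_sort _ hLsorted.nodup).mpr (hLsorted.imp le_of_lt)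
    rw [hsortL]
    have hback : L.mapIdx (fun j b => b + m' * j) = l := by
      apply List.ext_getElem
      · rw [List.length_mapIdx, hL, List.length_mapIdx]
      · intro j h1 h2
        rw [List.getElem_mapIdx, hLget j (by rw [hL, List.length_mapIdx]; omega)]
        have := hlow j h2
        have e : (m' + 1) * j = m' * j + j := by ring
        omega
    rw [hback, hl, Finset.sort_toFinset]
  case ri =>
    intro T hT
    rw [Finset.mem_powersetCard] at hT
    obtain ⟨hTsub, hTcard⟩ := hT
    set l := T.sort (· ≤ ·) with hl
    have hsorted : l.Pairwise (· < ·) := (Finset.sortedLT_sort T).pairwise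
    set U := l.mapIdx (fun j b => b + m' * j) with hU
    have hUl : U.length = l.length := by rw [hU, List.length_mapIdx]
    have hUget : ∀ j : ℕ, ∀ h : j < U.length, U[j] = l[j]'(by omega) + m' * j :=
      fun j h => List.getElem_mapIdx
    have hUsorted : U.Pairwise (· < ·) := by
      refine List.pairwise_iff_getElem.mpr ?_
      intro j1 j2 h1 h2 hlt
      rw [hUget j1 h1, hUget j2 h2]
      have := sorted_getElem_lt hsorted (j1 := j1) (j2 := j2) (by omega) (by omega) hlt
      have e1 : m' * j1 ≤ m' * j2 := Nat.mul_le_mul_left m' (by omega)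
      omega
    have hsortU : Finset.sort U.toFinset (· ≤ ·) = U :=
      (List.toFinset_sort _ hUsorted.nodup).mpr (hUsorted.imp le_of_lt)
    rw [hsortU]
    have hback : U.mapIdx (fun j i => i - m' * j) = l := by
      apply List.ext_getElem
      · rw [List.length_mapIdx, hU, List.length_mapIdx]
      · intro j h1 h2
        rw [List.getElem_mapIdx, hUget j (by rw [hU, List.length_mapIdx]; omega)]
        omega
    rw [hback, hl, Finset.sort_toFinset]

/-- With `A(k) = C(n - m k + k, k) P(w)^k` and `B(t) = P(N_w = t)` for a
nonoverlapping word `w` of length `m` in an i.i.d. string of length `n`,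
`A(k) = ∑_{t ≥ k} B(t) C(t, k)` for all `k` with `n - m k ≥ 0`
(terms with `t < k` vanish since `C(t,k) = 0`, and `N_w ≤ n` always). -/
theorem stmt4 {α : Type*} [Fintype α] [MeasurableSpace α] [MeasurableSingletonClass α]
    (μ : Measure α) [IsProbabilityMeasure μ] (n m : ℕ) (w : List α)
    (hw : Nonoverlapping w) (hm : w.length = m) (hm1 : 1 ≤ m)
    (k : ℕ) (hk : m * k ≤ n) :
    ((n - m * k + k).choose k : ℝ) * (wordProb μ w) ^ k
      = ∑ t ∈ Finset.range (n + 1),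
          ((Measure.pi fun _ : Fin n => μ) {x | countOcc w (List.ofFn x) = t}).toReal
            * (t.choose k : ℝ) := by
  classical
  set p : α → ℝ := fun a => (μ {a}).toReal with hp
  have hpsum : ∑ a : α, p a = 1 := sum_p_one μ
  have hwne : w ≠ [] := by
    intro h; rw [h] at hm; simp at hm; omega
  set d : α := w.head hwne with hd
  set PS := (Finset.range n).powersetCard k with hPS
  set O : (Fin n → α) → Finset ℕ :=
    fun x => (Finset.range n).filter (fun i => OccursAt (List.ofFn x) w i) with hO
  have hcount : ∀ x : Fin n → α, countOcc w (List.ofFn x) = (O x).card := by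
    intro x
    unfold countOcc
    rw [List.length_ofFn]
  have hle : ∀ x : Fin n → α, countOcc w (List.ofFn x) ≤ n := by
    intro x
    rw [hcount]
    calc (O x).card ≤ (Finset.range n).card := Finset.card_le_card (Finset.filter_subset _ _)
      _ = n := Finset.card_range n
  have step1 : ∑ t ∈ Finset.range (n + 1),
      ((Measure.pi fun _ : Fin n => μ) {x | countOcc w (List.ofFn x) = t}).toReal
        * (t.choose k : ℝ)
      = ∑ x : Fin n → α, (∏ i, p (x i)) * ((countOcc w (List.ofFn x)).choose k : ℝ) := by
    have hmeas : ∀ t, ((Measure.pi fun _ : Fin n => μ) {x | countOcc w (List.ofFn x) = t}).toReal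
        = ∑ x : Fin n → α, if countOcc w (List.ofFn x) = t then ∏ i, p (x i) else 0 := by
      intro t
      rw [pi_toReal]
      refine Finset.sum_congr rfl fun x _ => ?_
      by_cases h : countOcc w (List.ofFn x) = t
      · simp only [Set.mem_setOf_eq, if_pos h]; rfl
      · simp only [Set.mem_setOf_eq, if_neg h]
    simp_rw [hmeas, Finset.sum_mul, ite_mul, zero_mul]
    rw [Finset.sum_comm]
    refine Finset.sum_congr rfl fun x _ => ?_
    rw [Finset.sum_ite_eq (Finset.range (n + 1)) (countOcc w (List.ofFn x))
      (fun t => (∏ i, p (x i)) * (t.choose k : ℝ))]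
    rw [if_pos (Finset.mem_range.mpr (by have := hle x; omega))]
  have step2 : ∀ x : Fin n → α, ((countOcc w (List.ofFn x)).choose k : ℝ)
      = ∑ S ∈ PS, (if S ⊆ O x then (1 : ℝ) else 0) := by
    intro x
    rw [hcount, ← Finset.card_powersetCard k (O x)]
    have hOsub : O x ⊆ Finset.range n := Finset.filter_subset _ _
    have hsplit : (O x).powersetCard k = PS.filter (fun S => S ⊆ O x) := by
      ext S
      simp only [Finset.mem_powersetCard, Finset.mem_filter, hPS]
      constructor
      · rintro ⟨h1, h2⟩; exact ⟨⟨h1.trans hOsub, h2⟩, h1⟩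
      · rintro ⟨⟨_, h2⟩, h1⟩; exact ⟨h1, h2⟩
    rw [hsplit, Finset.card_filter]
    push_cast
    rfl
  have step3 : ∀ S ∈ PS, (∑ x : Fin n → α, if S ⊆ O x then ∏ i, p (x i) else 0)
      = if (∀ i ∈ S, i + m ≤ n) ∧ (∀ i ∈ S, ∀ j ∈ S, i < j → i + m ≤ j)
        then (wordProb μ w) ^ k else 0 := by
    intro S hS
    rw [hPS, Finset.mem_powersetCard] at hS
    obtain ⟨hSsub, hScard⟩ := hS
    have hiff : ∀ x : Fin n → α, (S ⊆ O x) ↔ ∀ i ∈ S, OccursAt (List.ofFn x) w i := by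
      intro x
      constructor
      · intro h i hi; exact (Finset.mem_filter.mp (h hi)).2
      · intro h i hi; exact Finset.mem_filter.mpr ⟨hSsub hi, h i hi⟩
    simp_rw [hiff]
    by_cases hgood : (∀ i ∈ S, i + m ≤ n) ∧ (∀ i ∈ S, ∀ j ∈ S, i < j → i + m ≤ j)
    · rw [if_pos hgood]
      rw [good_prob p hpsum n m w d hm hm1 S hgood.1 hgood.2, hScard]
      rfl
    · rw [if_neg hgood]
      refine Finset.sum_eq_zero fun x _ => ?_
      rw [if_neg]
      intro hall
      apply hgood
      constructor
      · intro i hi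
        have h1 := (hall i hi).1
        rw [List.length_ofFn, hm] at h1
        exact h1
      · intro i hi j hj hij
        by_contra hc
        push_neg at hc
        exact no_close_occ hw hm hm1 (List.ofFn x) hij hc (hall i hi) (hall j hj)
  have main : ∑ t ∈ Finset.range (n + 1),
      ((Measure.pi fun _ : Fin n => μ) {x | countOcc w (List.ofFn x) = t}).toReal
        * (t.choose k : ℝ)
      = ((PS.filter (fun S => (∀ i ∈ S, i + m ≤ n) ∧
          ∀ i ∈ S, ∀ j ∈ S, i < j → i + m ≤ j)).card : ℝ) * (wordProb μ w) ^ k := by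
    rw [step1]
    simp_rw [step2, Finset.mul_sum, mul_ite, mul_one, mul_zero]
    rw [Finset.sum_comm]
    rw [Finset.sum_congr rfl step3]
    rw [Finset.sum_ite, Finset.sum_const_zero, add_zero, Finset.sum_const,
      nsmul_eq_mul]
    congr!
  rw [main, hPS, count_good n m k hm1 hk]
end

section
/- Let w be a nonoverlapping word of length m and N_w its occurrence count in an i.i.d. string of length n with per-position probability p. For every t >= 1, E(N_w^t) = sum_{s=1}^{min(T,t)} A_{t,s} * C(n - s*m + s, s) * p^s, where A_{t,s} = sum_{r=0}^{s} C(s,r) r^t (-1)^{s-r} is the number of surjections from a t-element set onto an s-element set, and T = max { t' in ℕ : n - t'*m >= 0 }. -/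
open MeasureTheory
open scoped Classical

section AuxStmt7
variable {α : Type*}

lemma occursAt_iff_getD (z w : List α) (i : ℕ) (d : α) :
    OccursAt z w i ↔ i + w.length ≤ z.length ∧
      ∀ k ∈ Finset.range w.length, z.getD (i + k) d = w.getD k d := by
  unfold OccursAt
  refine and_congr_right fun hlen => ?_
  constructor
  · intro h k hk
    rw [Finset.mem_range] at hk
    have h1 : i + k < z.length := by omega
    have h2 : k < w.length := hk
    have e := List.getElem_of_eq h (show k < ((z.drop i).take w.length).length by
      simp [List.length_take, List.length_drop]; omega)
    rw [List.getD_eq_getElem z d h1, List.getD_eq_getElem w d h2, ← e]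
    rw [List.getElem_take, List.getElem_drop]
  · intro h
    apply List.ext_getElem
    · simp [List.length_take, List.length_drop]; omega
    · intro k hk1 hk2
      have hk : k < w.length := hk2
      have h1 : i + k < z.length := by omega
      have := h k (Finset.mem_range.2 hk)
      rw [List.getD_eq_getElem z d h1, List.getD_eq_getElem w d hk] at this
      rw [List.getElem_take, List.getElem_drop]
      exact this

lemma no_two_occ {w : List α} (hw : Nonoverlapping w) (z : List α) (i j : ℕ)
    (hij : i < j) (hjm : j < i + w.length) :
    ¬ (OccursAt z w i ∧ OccursAt z w j) := by
  rintro ⟨⟨hi1, hi2⟩, ⟨hj1, hj2⟩⟩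
  set m := w.length with hm
  apply hw
  refine ⟨(z.drop i).take (j - i + m), 0, j - i, ?_, by omega, ⟨?_, ?_⟩, ⟨?_, ?_⟩⟩
  · simp only [List.length_take, List.length_drop]
    omega
  · simp only [List.length_take, List.length_drop]; omega
  · rw [List.drop_zero, List.take_take]
    have : min m (j - i + m) = m := by omega
    rw [this, hi2]
  · simp only [List.length_take, List.length_drop]; omega
  · rw [List.drop_take, List.drop_drop]
    have h1 : i + (j - i) = j := by omega
    have h2 : j - i + m - (j - i) = m := by omega
    rw [h1, h2, List.take_take]
    simpa [hm] using hj2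


/-- `B` is `m`-separated: distinct elements differ by at least `m`. -/
def MSep (m : ℕ) (B : Finset ℕ) : Prop := ∀ i ∈ B, ∀ j ∈ B, i < j → i + m ≤ j

noncomputable def Dcount (m N s : ℕ) : ℕ :=
  (((Finset.range N).powersetCard s).filter (MSep m)).card

lemma Dcount_zero_right (m N : ℕ) : Dcount m N 0 = 1 := by
  unfold Dcount
  rw [Finset.powersetCard_zero]
  rw [Finset.filter_singleton]
  simp [MSep]

lemma Dcount_zero_left (m s : ℕ) (hs : 0 < s) : Dcount m 0 s = 0 := by
  unfold Dcount
  rw [Finset.range_zero, Finset.powersetCard_eq_empty.2 (by simp; omega)]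
  simp

lemma MSep.mono {m : ℕ} {B C : Finset ℕ} (h : MSep m B) (hCB : C ⊆ B) : MSep m C :=
  fun i hi j hj => h i (hCB hi) j (hCB hj)

lemma Dcount_rec (m N s : ℕ) (hm : 1 ≤ m) :
    Dcount m (N + 1) (s + 1) = Dcount m N (s + 1) + Dcount m (N + 1 - m) s := by
  classical
  unfold Dcount
  rw [← Finset.card_filter_add_card_filter_not (s := (((Finset.range (N+1)).powersetCard (s+1)).filter (MSep m))) (fun B => N ∉ B)]
  congr 1
  · -- N ∉ B part equals subsets of range N
    congr 1
    ext B
    simp only [Finset.mem_filter, Finset.mem_powersetCard]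
    constructor
    · rintro ⟨⟨⟨hsub, hcard⟩, hsep⟩, hN⟩
      refine ⟨⟨fun i hi => ?_, hcard⟩, hsep⟩
      have := hsub hi
      simp only [Finset.mem_range] at this ⊢
      rcases Nat.lt_succ_iff_lt_or_eq.1 this with h | h
      · exact h
      · exact absurd (h ▸ hi) hN
    · rintro ⟨⟨hsub, hcard⟩, hsep⟩
      refine ⟨⟨⟨fun i hi => ?_, hcard⟩, hsep⟩, fun hN => ?_⟩
      · have := hsub hi; simp only [Finset.mem_range] at this ⊢; omega
      · have := hsub hN; simp at this
  · -- N ∈ B part: bijection B ↦ B.erase N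
    rw [Finset.filter_filter]
    apply Finset.card_nbij' (fun B => B.erase N) (fun C => insert N C)
    · rintro B hB
      simp only [Finset.mem_coe, Finset.mem_filter, Finset.mem_powersetCard, not_not] at hB
      obtain ⟨⟨hsub, hcard⟩, hsep, hN⟩ := hB
      simp only [Finset.mem_coe, Finset.mem_filter, Finset.mem_powersetCard]
      refine ⟨⟨fun i hi => ?_, ?_⟩, MSep.mono hsep (Finset.erase_subset _ _)⟩
      · rw [Finset.mem_erase] at hi
        obtain ⟨hiN, hiB⟩ := hi
        have h1 : i < N + 1 := Finset.mem_range.1 (hsub hiB)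
        have h2 : i < N := by omega
        have := hsep i hiB N hN h2
        exact Finset.mem_range.2 (by omega)
      · rw [Finset.card_erase_of_mem hN, hcard]; omega
    · rintro C hC
      simp only [Finset.mem_coe, Finset.mem_filter, Finset.mem_powersetCard] at hC
      obtain ⟨⟨hsub, hcard⟩, hsep⟩ := hC
      have hNC : N ∉ C := by
        intro h; have := Finset.mem_range.1 (hsub h); omega
      simp only [Finset.mem_coe, Finset.mem_filter, Finset.mem_powersetCard, not_not]
      refine ⟨⟨fun i hi => ?_, ?_⟩, ?_, Finset.mem_insert_self _ _⟩
      · rcases Finset.mem_insert.1 hi with h | h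
        · exact Finset.mem_range.2 (by omega)
        · have := Finset.mem_range.1 (hsub h); exact Finset.mem_range.2 (by omega)
      · rw [Finset.card_insert_of_notMem hNC, hcard]
      · intro i hi j hj hij
        rcases Finset.mem_insert.1 hi with h | h
        · rcases Finset.mem_insert.1 hj with h' | h'
          · omega
          · have := Finset.mem_range.1 (hsub h'); omega
        · rcases Finset.mem_insert.1 hj with h' | h'
          · subst h'
            have := Finset.mem_range.1 (hsub h); omega
          · exact hsep i h j h' hij
    · rintro B hB
      simp only [Finset.mem_coe, Finset.mem_filter, not_not] at hB
      exact Finset.insert_erase hB.2.2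
    · rintro C hC
      simp only [Finset.mem_coe, Finset.mem_filter, Finset.mem_powersetCard] at hC
      have hNC : N ∉ C := by
        intro h; have := Finset.mem_range.1 (hC.1.1 h); omega
      exact Finset.erase_insert hNC

lemma Dcount_eq (m : ℕ) (hm : 1 ≤ m) : ∀ N s, Dcount m N s = (N + m - 1 - s * (m - 1)).choose s := by
  intro N
  induction N using Nat.strong_induction_on with
  | _ N IH =>
    intro s
    match N, s with
    | N, 0 => simpa using Dcount_zero_right m N
    | 0, s + 1 =>
      rw [Dcount_zero_left m (s+1) (by omega)]
      have hmul : (s+1) * (m-1) = s*(m-1) + (m-1) := by ring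
      have : 0 + m - 1 - (s+1)*(m-1) < s + 1 := by omega
      exact (Nat.choose_eq_zero_of_lt this).symm
    | N + 1, s + 1 =>
      rw [Dcount_rec m N s hm, IH N (by omega) (s+1), IH (N+1-m) (by omega) s]
      have hmul : (s+1) * (m-1) = s*(m-1) + (m-1) := by ring
      rcases Nat.lt_or_ge N (s * (m-1)) with hlt | hge
      · -- all terms zero
        have hs : 0 < s := by
          rcases Nat.eq_zero_or_pos s with h | h
          · subst h; simp at hlt
          · exact h
        have hmm : m - 1 ≤ s * (m - 1) := Nat.le_mul_of_pos_left _ hs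
        rw [Nat.choose_eq_zero_of_lt (show N + m - 1 - (s+1)*(m-1) < s+1 by omega),
            Nat.choose_eq_zero_of_lt (show N+1-m + m - 1 - s*(m-1) < s by omega),
            Nat.choose_eq_zero_of_lt (show N + 1 + m - 1 - (s+1)*(m-1) < s+1 by omega)]
      · -- Pascal
        have h1 : N + 1 + m - 1 - (s+1)*(m-1) = (N - s*(m-1)) + 1 := by omega
        have h2 : N + m - 1 - (s+1)*(m-1) = N - s*(m-1) := by omega
        rcases Nat.eq_zero_or_pos s with hs0 | hs0
        · subst hs0
          simp only [Nat.zero_mul, Nat.sub_zero, Nat.zero_add, Nat.choose_zero_right] at *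
          have e1 : (0+1)*(m-1) = m-1 := by ring
          rw [e1] at *
          have c1 : N + 1 + m - 1 - (m-1) = N + 1 := by omega
          have c2 : N + m - 1 - (m-1) = N := by omega
          rw [c1, c2, Nat.choose_one_right, Nat.choose_one_right]
        · have hmm : m - 1 ≤ s * (m - 1) := Nat.le_mul_of_pos_left _ hs0
          have h3 : N + 1 - m + m - 1 - s*(m-1) = N - s*(m-1) := by omega
          rw [h1, h2, h3, Nat.choose_succ_succ']
          omega


noncomputable def Nsurj (t s : ℕ) : ℕ :=
  ((Finset.univ : Finset (Fin t → Fin s)).filter (fun g => Function.Surjective g)).card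

lemma Nsurj_zero (t : ℕ) (ht : 0 < t) : Nsurj t 0 = 0 := by
  unfold Nsurj
  rw [Finset.card_eq_zero, Finset.filter_eq_empty_iff]
  intro g _
  intro _
  exact (g ⟨0, ht⟩).elim0

lemma Nsurj_eq_zero_of_lt (t s : ℕ) (h : t < s) : Nsurj t s = 0 := by
  unfold Nsurj
  rw [Finset.card_eq_zero, Finset.filter_eq_empty_iff]
  intro g _ hs
  have := Fintype.card_le_of_surjective g hs
  simp at this; omega

/-- fibers of the image map have cardinality given by surjection counts -/
lemma card_image_fiber {β : Type*} [DecidableEq β] [LinearOrder β] (t : ℕ) (ht : 0 < t)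
    (U : Finset β) (B : Finset β) (hBU : B ⊆ U) :
    ((Fintype.piFinset (fun _ : Fin t => U)).filter
      (fun f => Finset.image f Finset.univ = B)).card = Nsurj t B.card := by
  rcases B.eq_empty_or_nonempty with rfl | hne
  · rw [Finset.card_empty, Nsurj_zero t ht, Finset.card_eq_zero, Finset.filter_eq_empty_iff]
    intro f _
    intro h
    have : f ⟨0, ht⟩ ∈ Finset.image f Finset.univ := Finset.mem_image_of_mem f (Finset.mem_univ _)
    rw [h] at this
    simp at this
  · have hcpos : 0 < B.card := Finset.card_pos.2 hne
    set e := B.orderIsoOfFin (rfl : B.card = B.card) with he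
    let j0 : Fin B.card := ⟨0, hcpos⟩
    apply Finset.card_nbij' (i := fun f k => if h : f k ∈ B then e.symm ⟨f k, h⟩ else j0)
      (j := fun g k => (e (g k) : β))
    · intro f hf
      simp only [Finset.mem_coe, Finset.mem_filter, Fintype.mem_piFinset] at hf
      obtain ⟨hmem, him⟩ := hf
      simp only [Finset.mem_coe, Finset.mem_filter, Finset.mem_univ, true_and]
      intro y
      have hyB : (e y : β) ∈ Finset.image f Finset.univ := by
        rw [him]; exact (e y).2
      obtain ⟨k, _, hk⟩ := Finset.mem_image.1 hyB
      refine ⟨k, ?_⟩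
      have hkB : f k ∈ B := by rw [← him]; exact Finset.mem_image_of_mem f (Finset.mem_univ _)
      show (if h : f k ∈ B then e.symm ⟨f k, h⟩ else j0) = y
      rw [dif_pos hkB]
      have : (⟨f k, hkB⟩ : {x // x ∈ B}) = e y := Subtype.ext hk
      rw [this, OrderIso.symm_apply_apply]
    · intro g hg
      simp only [Finset.mem_coe, Finset.mem_filter, Finset.mem_univ, true_and] at hg
      simp only [Finset.mem_coe, Finset.mem_filter, Fintype.mem_piFinset]
      constructor
      · intro k; exact hBU (e (g k)).2
      · apply Finset.Subset.antisymm
        · intro b hb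
          obtain ⟨k, _, hk⟩ := Finset.mem_image.1 hb
          rw [← hk]; exact (e (g k)).2
        · intro b hb
          obtain ⟨y, hy⟩ := e.surjective ⟨b, hb⟩
          obtain ⟨k, hk⟩ := hg y
          refine Finset.mem_image.2 ⟨k, Finset.mem_univ _, ?_⟩
          rw [hk, hy]
    · intro f hf
      simp only [Finset.mem_coe, Finset.mem_filter, Fintype.mem_piFinset] at hf
      funext k
      have hkB : f k ∈ B := by rw [← hf.2]; exact Finset.mem_image_of_mem f (Finset.mem_univ _)
      simp only [dif_pos hkB, OrderIso.apply_symm_apply]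
    · intro g hg
      funext k
      have : (e (g k) : β) ∈ B := (e (g k)).2
      simp only [dif_pos this]
      have : (⟨(e (g k) : β), this⟩ : {x // x ∈ B}) = e (g k) := Subtype.ext rfl
      rw [this, OrderIso.symm_apply_apply]

lemma pow_eq_sum_nsurj (t : ℕ) (ht : 0 < t) (r : ℕ) :
    r ^ t = ∑ c ∈ Finset.range (r + 1), r.choose c * Nsurj t c := by
  classical
  have h1 : (Finset.univ : Finset (Fin t → Fin r)).card = r ^ t := by
    rw [Finset.card_univ, Fintype.card_fun]
    simp
  rw [← h1]
  rw [Finset.card_eq_sum_card_fiberwise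
    (f := fun g : Fin t → Fin r => Finset.image g Finset.univ)
    (t := (Finset.univ : Finset (Fin r)).powerset)
    (fun g _ => Finset.mem_powerset.2 (Finset.subset_univ _))]
  have h2 : ∀ C ∈ (Finset.univ : Finset (Fin r)).powerset,
      ((Finset.univ : Finset (Fin t → Fin r)).filter
        (fun g => Finset.image g Finset.univ = C)).card = Nsurj t C.card := by
    intro C hC
    have := card_image_fiber t ht (Finset.univ : Finset (Fin r)) C (Finset.subset_univ _)
    rwa [Fintype.piFinset_univ] at this
  rw [Finset.sum_congr rfl h2]
  rw [Finset.sum_powerset_apply_card (fun c => Nsurj t c)]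
  simp [Finset.card_univ, mul_comm]

lemma nsurj_eq_alt (t : ℕ) (ht : 0 < t) (s : ℕ) :
    (Nsurj t s : ℝ) = ∑ r ∈ Finset.range (s + 1),
      (s.choose r : ℝ) * (r : ℝ) ^ t * (-1 : ℝ) ^ (s - r) := by
  have key : ∀ r ∈ Finset.range (s+1), ((r:ℝ)) ^ t
      = ∑ c ∈ Finset.range (s + 1), (r.choose c : ℝ) * (Nsurj t c : ℝ) := by
    intro r hr
    rw [Finset.mem_range] at hr
    have := pow_eq_sum_nsurj t ht r
    have hcast : ((r : ℝ)) ^ t = ((r ^ t : ℕ) : ℝ) := by push_cast; ring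
    rw [hcast, this]
    push_cast
    refine Finset.sum_subset (Finset.range_subset_range.2 (by omega)) fun c _ hc => ?_
    rw [Finset.mem_range, not_lt] at hc
    rw [Nat.choose_eq_zero_of_lt (by omega)]
    simp
  symm
  calc ∑ r ∈ Finset.range (s + 1), (s.choose r : ℝ) * (r : ℝ) ^ t * (-1 : ℝ) ^ (s - r)
      = ∑ r ∈ Finset.range (s + 1), ∑ c ∈ Finset.range (s + 1),
          (s.choose r : ℝ) * ((r.choose c : ℝ) * (Nsurj t c : ℝ)) * (-1 : ℝ) ^ (s - r) := by
        refine Finset.sum_congr rfl fun r hr => ?_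
        rw [key r hr, Finset.mul_sum, Finset.sum_mul]
    _ = ∑ c ∈ Finset.range (s + 1), (Nsurj t c : ℝ) *
          ∑ r ∈ Finset.range (s + 1), (s.choose r : ℝ) * (r.choose c : ℝ) * (-1 : ℝ) ^ (s - r) := by
        rw [Finset.sum_comm]
        refine Finset.sum_congr rfl fun c _ => ?_
        rw [Finset.mul_sum]
        refine Finset.sum_congr rfl fun r _ => ?_
        ring
    _ = (Nsurj t s : ℝ) := by
        have inner : ∀ c ∈ Finset.range (s+1),
            (∑ r ∈ Finset.range (s + 1), (s.choose r : ℝ) * (r.choose c : ℝ) * (-1 : ℝ) ^ (s - r))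
            = if c = s then 1 else 0 := by
          intro c hc
          rw [Finset.mem_range] at hc
          have hsub : Finset.Ico c (s+1) ⊆ Finset.range (s+1) := by
            intro r hr; rw [Finset.mem_Ico] at hr; exact Finset.mem_range.2 hr.2
          have hzero : ∀ r ∈ Finset.range (s+1), r ∉ Finset.Ico c (s+1) →
              (s.choose r : ℝ) * (r.choose c : ℝ) * (-1 : ℝ) ^ (s - r) = 0 := by
            intro r hr hr'
            rw [Finset.mem_range] at hr
            have hrc : r < c := by
              by_contra hh
              exact hr' (Finset.mem_Ico.2 ⟨by omega, by omega⟩)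
            rw [Nat.choose_eq_zero_of_lt hrc]
            simp
          rw [← Finset.sum_subset hsub hzero]
          have hterm : ∀ r ∈ Finset.Ico c (s+1),
              (s.choose r : ℝ) * (r.choose c : ℝ) * (-1 : ℝ) ^ (s - r)
              = (s.choose c : ℝ) * (((s-c).choose (r-c) : ℝ) * (-1 : ℝ) ^ (s-c) * (-1:ℝ) ^ (r - c)) := by
            intro r hr
            rw [Finset.mem_Ico] at hr
            have hid := Nat.choose_mul (n := s) (show c ≤ r from hr.1)
            have hcast : (s.choose r : ℝ) * (r.choose c : ℝ) = (s.choose c : ℝ) * ((s-c).choose (r-c) : ℝ) := by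
              rw [← Nat.cast_mul, ← Nat.cast_mul, hid]
            have hh : (-1:ℝ) ^ (r-c) * (-1:ℝ) ^ (r-c) = 1 := by
              rw [← mul_pow]; norm_num
            have hsc : s - c = (s - r) + (r - c) := by omega
            have hsign2 : (-1:ℝ) ^ (s-c) * (-1:ℝ) ^ (r - c) = (-1 : ℝ) ^ (s - r) := by
              rw [hsc, pow_add, mul_assoc, hh, mul_one]
            rw [hcast, ← hsign2]
            ring
          rw [Finset.sum_congr rfl hterm, ← Finset.mul_sum]
          rw [Finset.sum_Ico_eq_sum_range]
          have hrange : s + 1 - c = (s - c) + 1 := by omega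
          rw [hrange]
          have hterm2 : ∀ j ∈ Finset.range ((s-c)+1),
              ((s-c).choose (c + j - c) : ℝ) * (-1:ℝ) ^ (s - c) * (-1:ℝ) ^ (c + j - c)
              = (-1:ℝ) ^ (s-c) * ((-1 : ℝ) ^ j * ((s-c).choose j : ℝ)) := by
            intro j _
            have : c + j - c = j := by omega
            rw [this]; ring
          rw [Finset.sum_congr rfl hterm2, ← Finset.mul_sum]
          have halt : ∑ j ∈ Finset.range ((s-c)+1), (-1 : ℝ) ^ j * ((s-c).choose j : ℝ)
              = if s - c = 0 then 1 else 0 := by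
            by_cases h0 : s - c = 0
            · rw [if_pos h0, h0]; simp
            · rw [if_neg h0]
              exact_mod_cast Int.alternating_sum_range_choose_of_ne h0
          rw [halt]
          by_cases hcs : c = s
          · subst hcs
            simp
          · have : s - c ≠ 0 := by omega
            rw [if_neg this, if_neg hcs]
            ring
        calc ∑ c ∈ Finset.range (s + 1), (Nsurj t c : ℝ) *
              ∑ r ∈ Finset.range (s + 1), (s.choose r : ℝ) * (r.choose c : ℝ) * (-1 : ℝ) ^ (s - r)
            = ∑ c ∈ Finset.range (s + 1), if c = s then (Nsurj t c : ℝ) else 0 := by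
              refine Finset.sum_congr rfl fun c hc => ?_
              rw [inner c hc]
              split <;> simp
          _ = (Nsurj t s : ℝ) := by
              rw [Finset.sum_ite_eq' (Finset.range (s+1)) s (fun c => (Nsurj t c : ℝ))]
              rw [if_pos (Finset.mem_range.2 (by omega))]


section Meas
variable {α : Type*} [Fintype α] [MeasurableSpace α] [MeasurableSingletonClass α]
  (μ : Measure α) [IsProbabilityMeasure μ]

lemma integral_pi_eq_sum (n : ℕ) (f : (Fin n → α) → ℝ) :
    ∫ x, f x ∂(Measure.pi fun _ : Fin n => μ)
      = ∑ x : Fin n → α, (∏ j, (μ {x j}).toReal) * f x := by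
  rw [integral_fintype (Integrable.of_finite)]
  refine Finset.sum_congr rfl fun x _ => ?_
  rw [smul_eq_mul]
  congr 1
  rw [measureReal_def, ← Set.univ_pi_singleton x, Measure.pi_pi]
  exact ENNReal.toReal_prod _ _

lemma sum_q_eq_one : ∑ a : α, (μ {a}).toReal = 1 := by
  have h : ∑ a : α, μ {a} = μ Set.univ := by
    rw [← measure_biUnion_finset]
    · congr
      simp [Set.eq_univ_iff_forall]
    · intro a _ b _ hab
      simp [Function.onFun, Set.disjoint_singleton, hab]
    · intro a _; exact measurableSet_singleton a
  rw [← ENNReal.toReal_sum (fun a _ => measure_ne_top μ _), h, measure_univ, ENNReal.toReal_one]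

lemma wordProb_eq_prod (w : List α) (d : α) :
    wordProb μ w = ∏ k ∈ Finset.range w.length, (μ {w.getD k d}).toReal := by
  induction w with
  | nil => simp [wordProb]
  | cons a w ih =>
    rw [wordProb, List.map_cons, List.prod_cons, List.length_cons,
      Finset.prod_range_succ']
    simp only [List.getD_cons_succ, List.getD_cons_zero]
    rw [← ih, wordProb, mul_comm]

end Meas

section Core
variable {α : Type*} [Fintype α] [MeasurableSpace α] [MeasurableSingletonClass α]
  (μ : Measure α) [IsProbabilityMeasure μ]

lemma ofFn_getD (n : ℕ) (x : Fin n → α) (d : α) (jj : ℕ) :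
    (List.ofFn x).getD jj d = if h : jj < n then x ⟨jj, h⟩ else d := by
  by_cases h : jj < n
  · rw [dif_pos h, List.getD_eq_getElem _ _ (by simpa using h), List.getElem_ofFn]
  · rw [dif_neg h, List.getD_eq_default]
    simpa using h

set_option maxHeartbeats 1000000 in
lemma EE_good (n : ℕ) (w : List α) (d : α) (B : Finset ℕ)
    (hsep : MSep w.length B) (hin : ∀ i ∈ B, i + w.length ≤ n) :
    ∑ x : Fin n → α, (∏ j, (μ {x j}).toReal) *
        ∏ i ∈ B, (if OccursAt (List.ofFn x) w i then (1:ℝ) else 0)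
      = wordProb μ w ^ B.card := by
  classical
  set m := w.length with hm
  set q : α → ℝ := fun a => (μ {a}).toReal with hq
  set χ : ℕ → α → ℝ := fun k a => if a = w.getD k d then 1 else 0 with hχ
  set P : Finset (ℕ × ℕ) := B ×ˢ Finset.range m with hP
  set G : ℕ → α → ℝ := fun j a =>
    q a * ∏ ik ∈ P.filter (fun ik => ik.1 + ik.2 = j), χ ik.2 a with hG
  set x' : (Fin n → α) → ℕ → α := fun x jj => if h : jj < n then x ⟨jj, h⟩ else d with hx'
  have hmaps : ∀ ik ∈ P, ik.1 + ik.2 ∈ Finset.range n := by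
    rintro ⟨i, k⟩ hik
    rw [hP, Finset.mem_product] at hik
    have h1 := hin i hik.1
    have h2 := Finset.mem_range.1 hik.2
    exact Finset.mem_range.2 (by omega)
  have hinj : ∀ a ∈ P, ∀ b ∈ P, a.1 + a.2 = b.1 + b.2 → a = b := by
    rintro ⟨i, k⟩ ha ⟨i', k'⟩ hb hco
    rw [hP, Finset.mem_product, Finset.mem_range] at ha hb
    simp only at hco ⊢
    rcases lt_trichotomy i i' with h | h | h
    · have := hsep i ha.1 i' hb.1 h; omega
    · subst h; simp; omega
    · have := hsep i' hb.1 i ha.1 h; omega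
  -- Step 1: per-x identity
  have S1 : ∀ x : Fin n → α, ∀ i ∈ B,
      (if OccursAt (List.ofFn x) w i then (1:ℝ) else 0)
        = ∏ k ∈ Finset.range m, χ k (x' x (i + k)) := by
    intro x i hi
    have hiff := occursAt_iff_getD (List.ofFn x) w i d
    rw [List.length_ofFn] at hiff
    have hcond : OccursAt (List.ofFn x) w i ↔
        ∀ k ∈ Finset.range m, x' x (i + k) = w.getD k d := by
      rw [hiff]
      have hlen : i + m ≤ n := hin i hi
      simp only [← hm, hlen, true_and]
      refine forall₂_congr fun k hk => ?_
      rw [ofFn_getD, hx']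
    rw [if_congr hcond rfl rfl, Finset.prod_boole]
  have S2 : ∀ x : Fin n → α,
      (∏ j, q (x j)) * ∏ i ∈ B, (if OccursAt (List.ofFn x) w i then (1:ℝ) else 0)
        = ∏ j : Fin n, G ↑j (x j) := by
    intro x
    have e1 : ∏ i ∈ B, (if OccursAt (List.ofFn x) w i then (1:ℝ) else 0)
        = ∏ ik ∈ P, χ ik.2 (x' x (ik.1 + ik.2)) := by
      rw [Finset.prod_congr rfl (S1 x), hP, Finset.prod_product]
    have e2 : ∏ ik ∈ P, χ ik.2 (x' x (ik.1 + ik.2))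
        = ∏ j ∈ Finset.range n, ∏ ik ∈ P.filter (fun ik => ik.1 + ik.2 = j),
            χ ik.2 (x' x j) := by
      rw [← Finset.prod_fiberwise_of_maps_to hmaps (fun ik => χ ik.2 (x' x (ik.1 + ik.2)))]
      refine Finset.prod_congr rfl fun j _ => Finset.prod_congr rfl fun ik hik => ?_
      rw [(Finset.mem_filter.1 hik).2]
    have e3 : (∏ j, q (x j)) = ∏ j ∈ Finset.range n, q (x' x j) := by
      rw [← Fin.prod_univ_eq_prod_range (fun jj => q (x' x jj)) n]
      refine Finset.prod_congr rfl fun j _ => ?_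
      rw [hx']
      simp
    rw [e1, e2, e3, ← Finset.prod_mul_distrib]
    rw [← Fin.prod_univ_eq_prod_range (fun jj => G jj (x' x jj)) n]
    refine Finset.prod_congr rfl fun j _ => ?_
    rw [hG, hx']
    simp
  rw [Finset.sum_congr rfl (fun x _ => S2 x)]
  -- Step 3: factorize
  have S3 : ∑ x : Fin n → α, ∏ j : Fin n, G ↑j (x j) = ∏ j : Fin n, ∑ a : α, G ↑j a := by
    rw [Finset.prod_univ_sum (fun _ : Fin n => (Finset.univ : Finset α))
      (fun (j : Fin n) (a : α) => G (↑j) a), Fintype.piFinset_univ]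
  rw [S3]
  -- Step 5: evaluate each factor
  have S5 : ∀ j : ℕ, (∑ a : α, G j a)
      = ∏ ik ∈ P.filter (fun ik => ik.1 + ik.2 = j), q (w.getD ik.2 d) := by
    intro j
    have hcard : (P.filter (fun ik => ik.1 + ik.2 = j)).card ≤ 1 := by
      rw [Finset.card_le_one]
      intro a ha b hb
      rw [Finset.mem_filter] at ha hb
      exact hinj a ha.1 b hb.1 (ha.2.trans hb.2.symm)
    rcases Finset.card_le_one_iff_subset_singleton.1 hcard with ⟨ik, hik⟩
    rcases (P.filter (fun ik => ik.1 + ik.2 = j)).eq_empty_or_nonempty with hF | hF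
    · rw [hF]
      simp only [Finset.prod_empty, mul_one, hG, hF]
      simpa using sum_q_eq_one μ
    · have hFs : P.filter (fun ik => ik.1 + ik.2 = j) = {ik} := by
        apply Finset.Subset.antisymm hik
        rcases hF with ⟨b, hb⟩
        have := hik hb
        rw [Finset.mem_singleton] at this
        subst this
        intro c hc
        rw [Finset.mem_singleton] at hc
        subst hc
        exact hb
      rw [hFs, Finset.prod_singleton]
      simp only [hG, hFs, Finset.prod_singleton, hχ]
      have hsum : ∀ a : α, (q a * if a = w.getD ik.2 d then (1:ℝ) else 0)
          = if a = w.getD ik.2 d then q a else 0 := fun a => by split <;> simp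
      rw [Finset.sum_congr rfl fun a _ => hsum a,
        Finset.sum_ite_eq' Finset.univ (w.getD ik.2 d) q, if_pos (Finset.mem_univ _)]
  have S5' : (∏ j : Fin n, ∑ a : α, G (↑j) a)
      = ∏ j : Fin n, ∏ ik ∈ P.filter (fun ik => ik.1 + ik.2 = ↑j), q (w.getD ik.2 d) :=
    Finset.prod_congr rfl fun j _ => S5 ↑j
  rw [S5']
  -- Step 6
  have e6 : ∏ j : Fin n, ∏ ik ∈ P.filter (fun ik => ik.1 + ik.2 = ↑j), q (w.getD ik.2 d)
      = ∏ j ∈ Finset.range n, ∏ ik ∈ P.filter (fun ik => ik.1 + ik.2 = j), q (w.getD ik.2 d) :=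
    Fin.prod_univ_eq_prod_range
      (fun j => ∏ ik ∈ P.filter (fun ik => ik.1 + ik.2 = j), q (w.getD ik.2 d)) n
  rw [e6, Finset.prod_fiberwise_of_maps_to hmaps (fun ik => q (w.getD ik.2 d)), hP,
    Finset.prod_product]
  have e7 : (∏ i ∈ B, ∏ k ∈ Finset.range m, q (w.getD (i, k).2 d))
      = ∏ i ∈ B, ∏ k ∈ Finset.range m, q (w.getD k d) := rfl
  rw [e7, Finset.prod_const, wordProb_eq_prod μ w d, ← hm]

end Core

end AuxStmt7

/-- Higher moments of the occurrence count of a nonoverlapping word `w` of length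
`m` in an i.i.d. string of length `n` with per-position probability `p`:
`E(N_w^t) = ∑_{s=1}^{min(T,t)} A_{t,s} C(n - s m + s, s) p^s` where
`A_{t,s} = ∑_{r=0}^s C(s,r) r^t (-1)^(s-r)` and `T = max {t' : n - t' m ≥ 0} = ⌊n/m⌋`. -/
theorem stmt7 {α : Type*} [Fintype α] [MeasurableSpace α] [MeasurableSingletonClass α]
    (μ : Measure α) [IsProbabilityMeasure μ] (n m : ℕ) (w : List α)
    (hw : Nonoverlapping w) (hm : w.length = m) (hm1 : 1 ≤ m)
    (p : ℝ) (hp : p = wordProb μ w) (t : ℕ) (ht : 1 ≤ t) :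
    (∫ x, ((countOcc w (List.ofFn x) : ℝ)) ^ t ∂(Measure.pi fun _ : Fin n => μ))
      = ∑ s ∈ Finset.Icc 1 (min (n / m) t),
          (∑ r ∈ Finset.range (s + 1),
              (s.choose r : ℝ) * (r : ℝ) ^ t * (-1 : ℝ) ^ (s - r))
            * ((n - s * m + s).choose s : ℝ) * p ^ s := by
  classical
  have hα : Nonempty α := by
    by_contra h
    have h1 : (Set.univ : Set α) = ∅ := Set.univ_eq_empty_iff.2 (not_nonempty_iff.1 h)
    have h2 := measure_univ (μ := μ)
    rw [h1, measure_empty] at h2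
    exact zero_ne_one h2
  obtain ⟨d⟩ := hα
  set q : α → ℝ := fun a => (μ {a}).toReal with hq
  set W : (Fin n → α) → ℝ := fun x => ∏ j, q (x j) with hW
  set ind : ℕ → (Fin n → α) → ℝ :=
    fun i x => if OccursAt (List.ofFn x) w i then 1 else 0 with hind
  set Q : Finset (Fin t → ℕ) := Fintype.piFinset (fun _ : Fin t => Finset.range n) with hQ
  set im : (Fin t → ℕ) → Finset ℕ := fun f => Finset.image f Finset.univ with him
  set EEf : Finset ℕ → ℝ := fun B => ∑ x : Fin n → α, W x * ∏ i ∈ B, ind i x with hEEf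
  set Good : Finset ℕ → Prop := fun B => (∀ i ∈ B, i + m ≤ n) ∧ MSep m B with hGood
  -- Step 1: integral to sum
  rw [integral_pi_eq_sum μ n (fun x => ((countOcc w (List.ofFn x) : ℝ)) ^ t)]
  -- Step 2: expand the power
  have hcount : ∀ x : Fin n → α, (countOcc w (List.ofFn x) : ℝ)
      = ∑ i ∈ Finset.range n, ind i x := by
    intro x
    rw [countOcc, List.length_ofFn, Finset.card_filter]
    push_cast
    rfl
  have hpow : ∀ x : Fin n → α, ((countOcc w (List.ofFn x) : ℝ)) ^ t
      = ∑ f ∈ Q, ∏ k : Fin t, ind (f k) x := by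
    intro x
    rw [hcount x]
    have h1 : (∑ i ∈ Finset.range n, ind i x) ^ t
        = ∏ _k : Fin t, (∑ i ∈ Finset.range n, ind i x) := by
      rw [Finset.prod_const, Finset.card_univ, Fintype.card_fin]
    rw [h1, Finset.prod_univ_sum (fun _ : Fin t => Finset.range n)
      (fun (_ : Fin t) (i : ℕ) => ind i x)]
  have step2 : ∑ x : Fin n → α, W x * ((countOcc w (List.ofFn x) : ℝ)) ^ t
      = ∑ f ∈ Q, EEf (im f) := by
    have swap : ∑ x : Fin n → α, W x * ((countOcc w (List.ofFn x) : ℝ)) ^ t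
        = ∑ f ∈ Q, ∑ x : Fin n → α, W x * ∏ k : Fin t, ind (f k) x := by
      rw [Finset.sum_comm]
      refine Finset.sum_congr rfl fun x _ => ?_
      rw [hpow x, Finset.mul_sum]
    rw [swap]
    refine Finset.sum_congr rfl fun f _ => ?_
    refine Finset.sum_congr rfl fun x _ => ?_
    congr 1
    -- ∏ k, ind (f k) x = ∏ i ∈ im f, ind i x
    rw [Finset.prod_comp (fun i => ind i x) f]
    refine Finset.prod_congr rfl fun i hi => ?_
    have hne : (Finset.univ.filter (fun a => f a = i)).card ≠ 0 := by
      rw [him] at hi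
      obtain ⟨k, _, hk⟩ := Finset.mem_image.1 hi
      exact Finset.card_ne_zero_of_mem
        (Finset.mem_filter.2 ⟨Finset.mem_univ _, hk⟩)
    by_cases hocc : OccursAt (List.ofFn x) w i
    · simp [hind, hocc]
    · simp [hind, hocc, zero_pow hne]
  rw [step2]
  -- Step 3: group by image
  have step3 : ∑ f ∈ Q, EEf (im f)
      = ∑ B ∈ Q.image im, (Q.filter (fun f => im f = B)).card • EEf B :=
    Finset.sum_comp EEf im
  rw [step3]
  have himage : Q.image im ⊆ (Finset.range n).powerset := by
    intro B hB
    obtain ⟨f, hf, rfl⟩ := Finset.mem_image.1 hB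
    rw [Finset.mem_powerset, him]
    intro i hi
    obtain ⟨k, _, hk⟩ := Finset.mem_image.1 hi
    rw [hQ, Fintype.mem_piFinset] at hf
    exact hk ▸ hf k
  have step4 : ∑ B ∈ Q.image im, (Q.filter (fun f => im f = B)).card • EEf B
      = ∑ B ∈ (Finset.range n).powerset, (Q.filter (fun f => im f = B)).card • EEf B := by
    refine Finset.sum_subset himage fun B _ hB => ?_
    have : Q.filter (fun f => im f = B) = ∅ := by
      rw [Finset.filter_eq_empty_iff]
      intro f hf hfB
      exact hB (Finset.mem_image.2 ⟨f, hf, hfB⟩)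
    rw [this, Finset.card_empty, zero_smul]
  rw [step4]
  -- Step 5: evaluate EEf
  have hEE : ∀ B ∈ (Finset.range n).powerset, EEf B = if Good B then p ^ B.card else 0 := by
    intro B _
    by_cases hg : Good B
    · rw [if_pos hg, hEEf, hp]
      have := EE_good μ n w d B (hm ▸ hg.2) (fun i hi => hm ▸ hg.1 i hi)
      exact this
    · rw [if_neg hg]
      rw [hGood, not_and_or] at hg
      rcases hg with hg | hg
      · push_neg at hg
        obtain ⟨i, hi, hni⟩ := hg
        rw [hEEf]
        refine Finset.sum_eq_zero fun x _ => ?_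
        have hnocc : ¬ OccursAt (List.ofFn x) w i := by
          intro hocc
          have := hocc.1
          rw [List.length_ofFn, hm] at this
          omega
        have : ind i x = 0 := by simp [hind, hnocc]
        rw [Finset.prod_eq_zero hi this, mul_zero]
      · rw [MSep] at hg
        push_neg at hg
        obtain ⟨i, hi, j, hj, hij, hjm⟩ := hg
        rw [hEEf]
        refine Finset.sum_eq_zero fun x _ => ?_
        by_cases hocc : OccursAt (List.ofFn x) w i
        · have hnoccj : ¬ OccursAt (List.ofFn x) w j := fun hoccj =>
            no_two_occ hw (List.ofFn x) i j hij (by rw [hm]; omega) ⟨hocc, hoccj⟩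
          have hnj : ind j x = 0 := by simp [hind, hnoccj]
          rw [Finset.prod_eq_zero hj hnj, mul_zero]
        · have hni : ind i x = 0 := by rw [hind]; simp [hocc]
          rw [Finset.prod_eq_zero hi hni, mul_zero]
  have step5 : ∑ B ∈ (Finset.range n).powerset, (Q.filter (fun f => im f = B)).card • EEf B
      = ∑ B ∈ (Finset.range n).powerset.filter Good,
          ((Nsurj t B.card : ℝ)) * p ^ B.card := by
    rw [Finset.sum_congr rfl (fun B hB => by rw [hEE B hB, smul_ite, smul_zero]),
      ← Finset.sum_filter]
    refine Finset.sum_congr rfl fun B hB => ?_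
    have hBsub := Finset.mem_powerset.1 (Finset.mem_filter.1 hB).1
    have hfib : (Q.filter (fun f => im f = B)).card = Nsurj t B.card := by
      rw [hQ, him]
      exact card_image_fiber t ht (Finset.range n) B hBsub
    rw [hfib, nsmul_eq_mul]
  rw [step5]
  -- Step 6: group by cardinality
  have hmap : ∀ B ∈ (Finset.range n).powerset.filter Good, B.card ∈ Finset.range (n + 1) := by
    intro B hB
    have := Finset.card_le_card (Finset.mem_powerset.1 (Finset.mem_filter.1 hB).1)
    rw [Finset.card_range] at this
    exact Finset.mem_range.2 (by omega)
  rw [← Finset.sum_fiberwise_of_maps_to hmap (fun B => (Nsurj t B.card : ℝ) * p ^ B.card)]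
  have step6 : ∀ s ∈ Finset.range (n + 1),
      (∑ B ∈ ((Finset.range n).powerset.filter Good).filter (fun B => B.card = s),
        (Nsurj t B.card : ℝ) * p ^ B.card)
      = (Dcount m (n + 1 - m) s : ℝ) * ((Nsurj t s : ℝ) * p ^ s) := by
    intro s _
    have hconst : ∀ B ∈ ((Finset.range n).powerset.filter Good).filter (fun B => B.card = s),
        (Nsurj t B.card : ℝ) * p ^ B.card = (Nsurj t s : ℝ) * p ^ s := by
      intro B hB
      rw [(Finset.mem_filter.1 hB).2]
    rw [Finset.sum_congr rfl hconst, Finset.sum_const, nsmul_eq_mul]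
    congr 2
    -- count identity
    rw [Dcount]
    congr 1
    ext B
    simp only [Finset.mem_filter, Finset.mem_powerset, Finset.mem_powersetCard, hGood]
    constructor
    · rintro ⟨⟨hsub, hin, hsep⟩, hcard⟩
      refine ⟨⟨fun i hi => ?_, hcard⟩, hsep⟩
      have h1 := Finset.mem_range.1 (hsub hi)
      have h2 := hin i hi
      exact Finset.mem_range.2 (by omega)
    · rintro ⟨⟨hsub, hcard⟩, hsep⟩
      refine ⟨⟨fun i hi => ?_, fun i hi => ?_, hsep⟩, hcard⟩
      · have := Finset.mem_range.1 (hsub hi)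
        exact Finset.mem_range.2 (by omega)
      · have := Finset.mem_range.1 (hsub hi)
        omega
  rw [Finset.sum_congr rfl step6]
  -- Step 7: restrict the sum
  have hsub : Finset.Icc 1 (min (n / m) t) ⊆ Finset.range (n + 1) := by
    intro s hs
    rw [Finset.mem_Icc] at hs
    have h1 : n / m ≤ n := Nat.div_le_self n m
    exact Finset.mem_range.2 (by omega)
  rw [← Finset.sum_subset hsub (fun s hs hs' => ?_)]
  · -- match terms on Icc
    refine Finset.sum_congr rfl fun s hs => ?_
    rw [Finset.mem_Icc] at hs
    obtain ⟨hs1, hs2⟩ := hs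
    have hsm : s * m ≤ n :=
      le_trans (Nat.mul_le_mul_right m (le_min_iff.1 hs2).1) (Nat.div_mul_le_self n m)
    rw [Dcount_eq m hm1 (n + 1 - m) s]
    have hidx : n + 1 - m + m - 1 - s * (m - 1) = n - s * m + s := by
      have e1 : s * (m - 1) = s * m - s := by rw [Nat.mul_sub_one]
      have e2 : s ≤ s * m := Nat.le_mul_of_pos_right s (by omega)
      have e4 : m ≤ s * m := Nat.le_mul_of_pos_left m (by omega)
      generalize hA : s * m = A at e1 e2 e4 hsm ⊢
      rw [e1, show n + 1 - m + m - 1 = n from by omega]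
      omega
    rw [hidx, ← nsurj_eq_alt t ht s]
    ring
  · -- terms outside Icc vanish
    rw [Finset.mem_range] at hs
    rw [Finset.mem_Icc, not_and_or] at hs'
    rcases hs' with h | h
    · -- s = 0
      have hs0 : s = 0 := by omega
      subst hs0
      rw [Nsurj_zero t ht]
      simp
    · rw [not_le, min_lt_iff] at h
      rcases h with h | h
      · -- n / m < s
        rw [Dcount_eq m hm1 (n + 1 - m) s]
        have hn : n < s * m := (Nat.div_lt_iff_lt_mul (show 0 < m by omega)).1 h
        have hs1 : 0 < s := by
          rcases Nat.eq_zero_or_pos s with rfl | h1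
          · exact absurd h (Nat.not_lt_zero _)
          · exact h1
        have hlt : n + 1 - m + m - 1 - s * (m - 1) < s := by
          have e1 : s * (m - 1) = s * m - s := by rw [Nat.mul_sub_one]
          have e2 : s ≤ s * m := Nat.le_mul_of_pos_right s (by omega)
          have e3 : m - 1 ≤ s * (m - 1) := Nat.le_mul_of_pos_left _ hs1
          generalize hA : s * m = A at e1 e2 hn
          rw [e1] at e3 ⊢
          rcases Nat.le_total m (n + 1) with hc | hc
          · rw [show n + 1 - m + m - 1 = n from by omega]
            omega
          · rw [show n + 1 - m = 0 from by omega]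
            omega
        rw [Nat.choose_eq_zero_of_lt hlt]
        simp
      · -- t < s
        rw [Nsurj_eq_zero_of_lt t s h]
        simp
end

section
/- Under the fair-coin measure there exists a sequence of nonoverlapping binary partial words w_1, w_2, ... with strictly increasing lengths tending to infinity such that (-log_2 P(w_n)) / |w_n| tends to 0 as n tends to infinity. -/
open scoped Classical

/-- A pair of words `(x, y)` is nonoverlapping if no string `z` with
`|z| < |x| + |y|` contains an occurrence of `x` and a (different, if `x = y`)
occurrence of `y`. -/
def PairNonoverlapping {α : Type*} (x y : List α) : Prop :=
  ¬ ∃ (z : List α) (i j : ℕ), z.length < x.length + y.length ∧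
    OccursAt z x i ∧ OccursAt z y j ∧ (x ≠ y ∨ i ≠ j)

/-- A set of words is nonoverlapping if every pair of its elements (including a
word with itself) is nonoverlapping. -/
def SetNonoverlapping {α : Type*} (S : Set (List α)) : Prop :=
  ∀ x ∈ S, ∀ y ∈ S, PairNonoverlapping x y

/-- `w'` is a realization of the partial word `w` (letters `some a`, wildcard
`none` = `?`): same length and agreement at all non-wildcard positions. -/
def Realizes {α : Type*} (w : List (Option α)) (w' : List α) : Prop :=
  List.Forall₂ (fun o a => ∀ b, o = some b → a = b) w w'

/-- A partial word is nonoverlapping if the set of its realizations is a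
nonoverlapping set of words. -/
def PartialNonoverlapping {α : Type*} (w : List (Option α)) : Prop :=
  SetNonoverlapping {w' | Realizes w w'}

/-- The word `0^m (1 ?^{m-1})^{m-1} 1`, described positionally:
`0` at positions `< m`, `1` at positions that are positive multiples of `m`
(up to `m*m`), wildcards elsewhere. -/
def myWord (m : ℕ) : List (Option Bool) :=
  List.ofFn (fun i : Fin (m*m+1) =>
    if (i : ℕ) < m then some false else if (i : ℕ) % m = 0 then some true else none)

lemma myWord_length (m : ℕ) : (myWord m).length = m*m+1 := by
  simp [myWord]

lemma realizes_length {m : ℕ} {x : List Bool} (h : Realizes (myWord m) x) :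
    x.length = m*m+1 := by
  rw [← h.length_eq, myWord_length]

lemma realizes_getElem {m : ℕ} {x : List Bool} (h : Realizes (myWord m) x)
    {p : ℕ} (hp : p < m*m+1) (b : Bool)
    (hw : (if p < m then some false else if p % m = 0 then some true else none) = some b) :
    x[p]'(by rw [realizes_length h]; exact hp) = b := by
  have hlen := realizes_length h
  have := (List.forall₂_iff_get.1 h).2 p (by rw [myWord_length]; exact hp)
    (by rw [hlen]; exact hp)
  simp only [List.get_eq_getElem] at this
  apply this
  simp only [myWord]
  rw [List.getElem_ofFn]
  exact hw

lemma realizes_false {m : ℕ} {x : List Bool} (h : Realizes (myWord m) x)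
    {p : ℕ} (hp : p < m) (hm : 1 ≤ m) :
    x[p]'(by rw [realizes_length h]; nlinarith) = false := by
  apply realizes_getElem h (by nlinarith)
  simp [hp]

lemma realizes_true {m : ℕ} {x : List Bool} (h : Realizes (myWord m) x)
    {p : ℕ} (hp1 : m ≤ p) (hp2 : p % m = 0) (hp3 : p ≤ m*m) :
    x[p]'(by rw [realizes_length h]; omega) = true := by
  apply realizes_getElem h (by omega)
  rw [if_neg (by omega), if_pos hp2]

lemma occursAt_getElem {z x : List Bool} {i : ℕ} (h : OccursAt z x i)
    {p : ℕ} (hp : p < x.length) :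
    z[i+p]'(by have := h.1; omega) = x[p] := by
  obtain ⟨h1, h2⟩ := h
  have hp' : p < ((z.drop i).take x.length).length := by
    simp only [List.length_take, List.length_drop]; omega
  have e1 : ((z.drop i).take x.length)[p]'hp' = x[p] := List.getElem_of_eq h2 _
  rw [← e1, List.getElem_take, List.getElem_drop]

/-- Key combinatorial fact: two realizations of `myWord m` cannot occur at
shifted positions `i < j` in a word `z` with `|z| < |x| + |y|`. -/
lemma no_overlap {m : ℕ} (hm : 2 ≤ m) {x y z : List Bool} {i j : ℕ}
    (hx : Realizes (myWord m) x) (hy : Realizes (myWord m) y)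
    (hxi : OccursAt z x i) (hyj : OccursAt z y j) (hij : i < j)
    (hz : z.length < x.length + y.length) : False := by
  have hxl := realizes_length hx
  have hyl := realizes_length hy
  have hjn : j + (m*m+1) ≤ z.length := by rw [← hyl]; exact hyj.1
  have hd1 : 1 ≤ j - i := by omega
  have hd2 : j - i ≤ m*m := by omega
  have hmm : m ≤ m*m := Nat.le_mul_of_pos_left m (by omega)
  set d := j - i with hdd
  -- pick the clash position `p` (in `y`) so that `d + p` (in `x`) carries a `1`
  -- while `p < m` carries a `0`.
  obtain ⟨p, hpm, hq1, hq2, hq3⟩ :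
      ∃ p, p < m ∧ m ≤ d + p ∧ (d + p) % m = 0 ∧ d + p ≤ m*m := by
    by_cases hc : d ≤ m*m - m
    · refine ⟨(m*m - d) % m, Nat.mod_lt _ (by omega), ?_, ?_, ?_⟩
      · have key := Nat.div_add_mod (m*m - d) m
        have hdvd : m ∣ d + (m*m - d) % m := by
          have : d + (m*m - d) % m = m*m - m*((m*m - d)/m) := by omega
          rw [this]
          exact Nat.dvd_sub (Dvd.intro m rfl) (Dvd.intro _ rfl)
        exact Nat.le_of_dvd (by omega) hdvd
      · have key := Nat.div_add_mod (m*m - d) m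
        have hdvd : m ∣ d + (m*m - d) % m := by
          have : d + (m*m - d) % m = m*m - m*((m*m - d)/m) := by omega
          rw [this]
          exact Nat.dvd_sub (Dvd.intro m rfl) (Dvd.intro _ rfl)
        exact Nat.mod_eq_zero_of_dvd hdvd
      · have : (m*m - d) % m < m := Nat.mod_lt _ (by omega)
        omega
    · refine ⟨m*m - d, by omega, by omega, ?_, by omega⟩
      have : d + (m*m - d) = m*m := by omega
      rw [this]
      exact Nat.mul_mod_left m m
  -- now derive the contradiction
  have hyp : y[p]'(by rw [hyl]; omega) = false := realizes_false hy hpm (by omega)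
  have hxq : x[d+p]'(by rw [hxl]; omega) = true := realizes_true hx hq1 hq2 hq3
  have e1 : z[i+(d+p)]'(by omega) = x[d+p]'(by rw [hxl]; omega) :=
    occursAt_getElem hxi (by rw [hxl]; omega)
  have e2 : z[j+p]'(by omega) = y[p]'(by rw [hyl]; omega) :=
    occursAt_getElem hyj (by rw [hyl]; omega)
  have hidx : i + (d + p) = j + p := by omega
  have : (true : Bool) = false := by
    rw [← hxq, ← e1, ← hyp, ← e2]
    simp [hidx]
  exact absurd this (by simp)

lemma myWord_nonoverlapping {m : ℕ} (hm : 2 ≤ m) :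
    PartialNonoverlapping (myWord m) := by
  intro x hx y hy
  rintro ⟨z, i, j, hz, hxi, hyj, hne⟩
  simp only [Set.mem_setOf_eq] at hx hy
  rcases lt_trichotomy i j with h | h | h
  · exact no_overlap hm hx hy hxi hyj h hz
  · subst h
    have hxy : x = y := by
      have h1 := hxi.2
      have h2 := hyj.2
      rw [realizes_length hx] at h1
      rw [realizes_length hy] at h2
      rw [← h1, ← h2]
    rcases hne with hne | hne
    · exact hne hxy
    · exact hne rfl
  · exact no_overlap hm hy hx hyj hxi h (by omega)

lemma countP_or_le (l : List ℕ) (p q : ℕ → Bool) :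
    l.countP (fun a => p a || q a) ≤ l.countP p + l.countP q := by
  induction l with
  | nil => simp
  | cons a l ih =>
    simp only [List.countP_cons]
    cases hp : p a <;> cases hq : q a <;> simp [hp, hq] <;> omega

lemma myWord_countP_le {m : ℕ} (hm : 1 ≤ m) :
    ((myWord m).countP fun o => o.isSome) ≤ 2*m+1 := by
  have h1 : myWord m = (List.range (m*m+1)).map
      (fun i => if i < m then some false else if i % m = 0 then some true else none) := by
    apply List.ext_getElem (by simp [myWord])
    intro i hi1 hi2
    simp only [myWord, List.getElem_ofFn, List.getElem_map, List.getElem_range]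
  rw [h1, List.countP_map]
  have h2 : (List.range (m*m+1)).countP
        ((fun o : Option Bool => o.isSome) ∘
          (fun i => if i < m then some false else if i % m = 0 then some true else none))
      ≤ (List.range (m*m+1)).countP (fun i => decide (i < m))
        + (List.range (m*m+1)).countP (fun i => decide (i % m = 0)) := by
    refine le_trans (List.countP_mono_left ?_) (countP_or_le _ _ _)
    intro i _ h
    simp only [Function.comp] at h
    by_cases h1 : i < m
    · simp [h1]
    · by_cases h2 : i % m = 0
      · simp [h1, h2]
      · simp [h1, h2] at h
  refine le_trans h2 ?_
  have e1 : (List.range (m*m+1)).countP (fun i => decide (i < m)) = m := by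
    have : (List.range (m*m+1)).countP (fun i => decide (i < m))
        = ((Finset.range (m*m+1)).filter (fun i => i < m)).card :=
      Nat.count_eq_card_filter_range _ _
    rw [this]
    have : (Finset.range (m*m+1)).filter (fun i => i < m) = Finset.range m := by
      ext i
      simp only [Finset.mem_filter, Finset.mem_range]
      constructor
      · exact fun h => h.2
      · intro h; exact ⟨by nlinarith, h⟩
    rw [this, Finset.card_range]
  have e2 : (List.range (m*m+1)).countP (fun i => decide (i % m = 0)) ≤ m+1 := by
    have : (List.range (m*m+1)).countP (fun i => decide (i % m = 0))
        = ((Finset.range (m*m+1)).filter (fun i => i % m = 0)).card :=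
      Nat.count_eq_card_filter_range _ _
    rw [this]
    calc ((Finset.range (m*m+1)).filter (fun i => i % m = 0)).card
        ≤ (Finset.range (m+1)).card := by
          apply Finset.card_le_card_of_injOn (fun i => i / m)
          · intro i hi
            simp only [Finset.mem_coe, Finset.mem_filter, Finset.mem_range] at hi ⊢
            obtain ⟨hi1, hi2⟩ := hi
            have := Nat.div_mul_cancel (Nat.dvd_iff_mod_eq_zero.mpr hi2)
            have hdm : i / m ≤ m := by
              by_contra hcon
              push_neg at hcon
              nlinarith
            omega
          · intro a ha b hb hab
            simp only [Finset.mem_coe, Finset.mem_filter, Finset.mem_range] at ha hb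
            have ha' := Nat.div_mul_cancel (Nat.dvd_iff_mod_eq_zero.mpr ha.2)
            have hb' := Nat.div_mul_cancel (Nat.dvd_iff_mod_eq_zero.mpr hb.2)
            simp only at hab
            rw [← ha', ← hb', hab]
      _ = m+1 := Finset.card_range _
  omega


/-- There is a sequence of nonoverlapping binary partial words with strictly
increasing lengths tending to infinity such that `(-log₂ P(wₙ)) / |wₙ| → 0`,
where `P(w) = 2^(-k)` with `k` the number of non-wildcard symbols of `w`. -/
theorem stmt12 :
    ∃ w : ℕ → List (Option Bool),
      (∀ n, PartialNonoverlapping (w n))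
      ∧ StrictMono (fun n => (w n).length)
      ∧ Filter.Tendsto (fun n => ((w n).length : ℝ)) Filter.atTop Filter.atTop
      ∧ Filter.Tendsto
          (fun n =>
            (-(Real.logb 2
                (((1 : ℝ) / 2) ^ ((w n).countP fun o => o.isSome))))
              / ((w n).length : ℝ))
          Filter.atTop (nhds 0) := by
  refine ⟨fun k => myWord (k+2), fun n => myWord_nonoverlapping (by omega), ?_, ?_, ?_⟩
  · intro a b h
    simp only [myWord_length]
    nlinarith
  · apply Filter.tendsto_atTop_mono (fun n => ?_) tendsto_natCast_atTop_atTop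
    simp only [myWord_length]
    push_cast
    nlinarith [Nat.cast_nonneg (α := ℝ) n]
  · have hlog : ∀ k : ℕ, -(Real.logb 2 (((1:ℝ)/2)^k)) = k := by
      intro k
      rw [one_div, inv_pow, Real.logb_inv, Real.logb_pow,
        Real.logb_self_eq_one (by norm_num : (1:ℝ) < 2)]
      ring
    simp only [hlog]
    apply squeeze_zero (g := fun n : ℕ => 3 / ((n:ℝ)+2))
    · intro n
      positivity
    · intro n
      have hk : ((myWord (n+2)).countP fun o => o.isSome) ≤ 2*(n+2)+1 :=
        myWord_countP_le (by omega)
      have hk' : (((myWord (n+2)).countP fun o => o.isSome) : ℝ) ≤ 2*((n:ℝ)+2)+1 := by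
        calc (((myWord (n+2)).countP fun o => o.isSome) : ℝ) ≤ ((2*(n+2)+1 : ℕ) : ℝ) := by
              exact_mod_cast hk
          _ = 2*((n:ℝ)+2)+1 := by push_cast; ring
      rw [myWord_length, div_le_div_iff₀ (by positivity) (by positivity)]
      push_cast
      nlinarith [Nat.cast_nonneg (α := ℝ) n, hk']
    · apply Filter.Tendsto.div_atTop tendsto_const_nhds
      exact Filter.tendsto_atTop_add_const_right _ 2 tendsto_natCast_atTop_atTop
end
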